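/- For α ∈ (0,1] and x irrational in the domain of A_α, set β_{α,n} := ∏_{i=0}^n A_α^i(x). Assuming q_{α,n+1} > q_{α,n} > 0 for all n, and that ε_{α,n+1} x_{α,n+1} ∈ [α−1, α), one has 1/(1+α) < β_{α,n} · q_{α,n+1} < 1/α for all n ≥ 0. -/

import Mathlib

noncomputable section

/-- `ᾱ = max(α, 1-α)`. -/
def abar (α : ℝ) : ℝ := max α (1 - α)

/-- The Nakada `α`-continued fraction map `A_α(x) = |1/x − ⌊1/x + 1 − α⌋|`. -/
def Amap (α x : ℝ) : ℝ := |1 / x - ⌊1 / x + 1 - α⌋|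

/-- The orbit `x_{α,n} = A_α^n(x)`. -/
def xseq (α x : ℝ) (n : ℕ) : ℝ := (Amap α)^[n] x

/-- The partial quotients `a_{α,n}`. -/
def dig (α x : ℝ) : ℕ → ℤ
  | 0 => ⌊x + 1 - abar α⌋
  | n + 1 => ⌊1 / xseq α x n + 1 - α⌋

/-- The signs `ε_{α,n} ∈ {±1}`. -/
def sgn (α x : ℝ) : ℕ → ℝ
  | 0 => Real.sign (x - ⌊x + 1 - abar α⌋)
  | n + 1 => Real.sign (1 / xseq α x n - ⌊1 / xseq α x n + 1 - α⌋)

/-- The matrix products defining the convergents: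
`M_n = (1, a₀; 0, 1) · ∏_{k=1}^n (0, ε_{k−1}; 1, a_k)`. -/
def Mmat (α x : ℝ) : ℕ → Matrix (Fin 2) (Fin 2) ℝ
  | 0 => !![1, (dig α x 0 : ℝ); 0, 1]
  | n + 1 => Mmat α x n * !![0, sgn α x n; 1, (dig α x (n + 1) : ℝ)]

/-- Numerator `p_{α,n}` of the `n`th convergent. -/
def pconv (α x : ℝ) (n : ℕ) : ℝ := Mmat α x n 0 1

/-- Denominator `q_{α,n}` of the `n`th convergent. -/
def qconv (α x : ℝ) (n : ℕ) : ℝ := Mmat α x n 1 1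

/-- `β_{α,n} = ∏_{i=0}^n A_α^i(x)`. -/
def betaseq (α x : ℝ) (n : ℕ) : ℝ := ∏ i ∈ Finset.range (n + 1), xseq α x i

namespace Stmt6Aux

lemma sign_mul_abs (t : ℝ) : Real.sign t * |t| = t := by
  rcases lt_trichotomy t 0 with h | h | h
  · rw [Real.sign_of_neg h, abs_of_neg h]; ring
  · simp [h]
  · rw [Real.sign_of_pos h, abs_of_pos h]; ring

variable (α x : ℝ)

lemma xseq_succ (n : ℕ) : xseq α x (n + 1) = Amap α (xseq α x n) :=
  Function.iterate_succ_apply' _ _ _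

lemma irr_xseq (hx : Irrational x) (n : ℕ) : Irrational (xseq α x n) := by
  induction n with
  | zero => exact hx
  | succ n ih =>
    rw [xseq_succ, Amap]
    have h1 : Irrational (1 / xseq α x n - (⌊1 / xseq α x n + 1 - α⌋ : ℤ)) := by
      have : Irrational (xseq α x n)⁻¹ := ih.inv
      simpa [one_div] using this.sub_intCast ⌊1 / xseq α x n + 1 - α⌋
    rcases abs_choice (1 / xseq α x n - (⌊1 / xseq α x n + 1 - α⌋ : ℤ)) with h | h
    · rwa [h]
    · rw [h]; exact h1.neg

lemma xseq_pos (hx : Irrational x) (h0 : 0 < x) (n : ℕ) : 0 < xseq α x n := by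
  cases n with
  | zero => exact h0
  | succ n =>
    have hne := (irr_xseq α x hx (n + 1)).ne_zero
    rw [xseq_succ, Amap] at hne ⊢
    exact lt_of_le_of_ne (abs_nonneg _) (Ne.symm hne)

lemma eps_eq (n : ℕ) : sgn α x (n + 1) * xseq α x (n + 1)
    = 1 / xseq α x n - (⌊1 / xseq α x n + 1 - α⌋ : ℤ) := by
  rw [xseq_succ, Amap]
  show Real.sign _ * _ = _
  exact sign_mul_abs _

lemma qp_zero : Mmat α x 0 1 0 = 0 := by simp [Mmat]

lemma qconv_zero : qconv α x 0 = 1 := by simp [qconv, Mmat]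

lemma qp_succ (n : ℕ) : Mmat α x (n + 1) 1 0 = qconv α x n := by
  simp [Mmat, qconv, Matrix.mul_apply, Fin.sum_univ_two]

lemma qconv_succ (n : ℕ) : qconv α x (n + 1)
    = Mmat α x n 1 0 * sgn α x n + qconv α x n * (dig α x (n + 1) : ℤ) := by
  simp [qconv, Mmat, Matrix.mul_apply, Fin.sum_univ_two]

lemma key (hx : Irrational x) (h0 : 0 < x) : ∀ n : ℕ, betaseq α x n *
    (qconv α x (n + 1) + qconv α x n * (sgn α x (n + 1) * xseq α x (n + 1))) = 1 := by
  intro n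
  induction n with
  | zero =>
    have hne : xseq α x 0 ≠ 0 := ne_of_gt h0
    rw [eps_eq α x 0, qconv_succ α x 0, qp_zero, qconv_zero]
    have hdig : ((dig α x 1 : ℤ) : ℝ) = ((⌊1 / xseq α x 0 + 1 - α⌋ : ℤ) : ℝ) := rfl
    simp only [betaseq, zero_add, Finset.prod_range_one, hdig]
    generalize (((⌊1 / xseq α x 0 + 1 - α⌋ : ℤ)) : ℝ) = f
    field_simp
    ring
  | succ n ih =>
    have hne : xseq α x (n + 1) ≠ 0 := ne_of_gt (xseq_pos α x hx h0 (n + 1))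
    have hb : betaseq α x (n + 1) = betaseq α x n * xseq α x (n + 1) :=
      Finset.prod_range_succ _ _
    rw [eps_eq α x (n + 1), qconv_succ α x (n + 1), qp_succ α x n, hb]
    have h1 : xseq α x (n + 1) * (qconv α x n * sgn α x (n + 1)
        + qconv α x (n + 1) * (dig α x (n + 2) : ℤ)
        + qconv α x (n + 1) * (1 / xseq α x (n + 1) - (⌊1 / xseq α x (n + 1) + 1 - α⌋ : ℤ)))
        = qconv α x (n + 1) + qconv α x n * (sgn α x (n + 1) * xseq α x (n + 1)) := by
      have hdig : ((dig α x (n + 2) : ℤ) : ℝ) = ((⌊1 / xseq α x (n + 1) + 1 - α⌋ : ℤ) : ℝ) := by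
        rfl
      rw [hdig]
      generalize (((⌊1 / xseq α x (n + 1) + 1 - α⌋ : ℤ)) : ℝ) = f
      field_simp
      ring
    calc betaseq α x n * xseq α x (n + 1) *
          (qconv α x n * sgn α x (n + 1) + qconv α x (n + 1) * (dig α x (n + 2) : ℤ)
            + qconv α x (n + 1) * (1 / xseq α x (n + 1) - (⌊1 / xseq α x (n + 1) + 1 - α⌋ : ℤ)))
        = betaseq α x n * (qconv α x (n + 1)
            + qconv α x n * (sgn α x (n + 1) * xseq α x (n + 1))) := by
          rw [mul_assoc, h1]
      _ = 1 := ih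

lemma beta_pos (hx : Irrational x) (h0 : 0 < x) (n : ℕ) : 0 < betaseq α x n :=
  Finset.prod_pos fun i _ => xseq_pos α x hx h0 i

end Stmt6Aux

/-- If `q_{α,n+1} > q_{α,n} > 0` and `ε_{α,n+1} x_{α,n+1} ∈ [α−1, α)` for all `n`,
then `1/(1+α) < β_{α,n} q_{α,n+1} < 1/α` for all `n ≥ 0`. -/
theorem stmt6 (α x : ℝ) (hα : α ∈ Set.Ioc (0 : ℝ) 1) (hx : Irrational x)
    (hdom : x ∈ Set.Ioo 0 (abar α))
    (hq : ∀ n : ℕ, 0 < qconv α x n ∧ qconv α x n < qconv α x (n + 1))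
    (hex : ∀ n : ℕ, sgn α x (n + 1) * xseq α x (n + 1) ∈ Set.Ico (α - 1) α) :
    ∀ n : ℕ, 1 / (1 + α) < betaseq α x n * qconv α x (n + 1) ∧
      betaseq α x n * qconv α x (n + 1) < 1 / α := by
  intro n
  obtain ⟨hα0, hα1⟩ := hα
  have h0 : 0 < x := hdom.1
  set e : ℝ := sgn α x (n + 1) * xseq α x (n + 1) with he
  set qn : ℝ := qconv α x n
  set q : ℝ := qconv α x (n + 1)
  set β : ℝ := betaseq α x n
  have hkey : β * (q + qn * e) = 1 := Stmt6Aux.key α x hx h0 n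
  have hβ : 0 < β := Stmt6Aux.beta_pos α x hx h0 n
  have hqn : 0 < qn := (hq n).1
  have hlt : qn < q := (hq n).2
  have hq0 : 0 < q := hqn.trans hlt
  have he1 : α - 1 ≤ e := (hex n).1
  have he2 : e < α := (hex n).2
  have hene : e ≠ 0 := by
    rw [he, Stmt6Aux.eps_eq α x n]
    have h1 : Irrational (xseq α x n)⁻¹ := (Stmt6Aux.irr_xseq α x hx n).inv
    have h2 : Irrational (1 / xseq α x n - (⌊1 / xseq α x n + 1 - α⌋ : ℤ)) := by
      simpa [one_div] using h1.sub_intCast ⌊1 / xseq α x n + 1 - α⌋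
    exact h2.ne_zero
  set D : ℝ := q + qn * e with hD
  -- upper bound for D
  have hDub : D < (1 + α) * q := by
    rcases le_or_gt e 0 with h | h
    · have : qn * e ≤ 0 := mul_nonpos_of_nonneg_of_nonpos hqn.le h
      nlinarith
    · nlinarith
  -- lower bound for D
  have hDlb : α * q < D := by
    rcases lt_or_gt_of_ne hene with h | h
    · -- e < 0, so α - 1 ≤ e < 0, α < 1
      nlinarith
    · nlinarith [mul_pos hqn h]
  have hDpos : 0 < D := lt_trans (mul_pos hα0 hq0) hDlb
  have hβq : β * q = q / D := by
    have hDne : D ≠ 0 := ne_of_gt hDpos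
    have : β = 1 / D := by
      field_simp
      linear_combination hkey
    rw [this]; ring
  constructor
  · rw [hβq, div_lt_div_iff₀ (by linarith) hDpos]
    nlinarith
  · rw [hβq, div_lt_div_iff₀ hDpos hα0]
    nlinarith
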